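/- Minors of the matrix Y parametrizing the open cell of the Grassmannian are expressed through Plücker coordinates: for 1 ≤ α_1 < ... < α_l ≤ k and 1 ≤ β_1 < ... < β_l ≤ n−k, det(Y_{α_i β_j})_{i,j=1}^l = (−1)^{kl − l(l−1)/2 − (α_1+...+α_l)} · x_{([1,k]∖{α_1,...,α_l}) ∪ {β_1+k,...,β_l+k}} / x_{[1,k]}, where x_I is the Plücker coordinate of the k×n matrix [1_k Y] on column set I. -/

import Mathlib

open Matrix

/-- The `k×n` matrix `[1_k  Y]` (identity block followed by `Y`), `n = k + m`. -/
def idY (k m : ℕ) (Y : Matrix (Fin k) (Fin m) ℝ) : Matrix (Fin k) (Fin (k + m)) ℝ :=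
  Matrix.of fun p => Fin.append (fun q : Fin k => if p = q then (1 : ℝ) else 0) (Y p)

/-- The Plücker coordinate `x_S` of `[1_k  Y]`: the minor on the columns indexed by the
`k`-element subset `S` of `[1, k+m]`, taken in increasing order. -/
noncomputable def plucker (k m : ℕ) (Y : Matrix (Fin k) (Fin m) ℝ)
    (S : Finset (Fin (k + m))) (hS : S.card = k) : ℝ :=
  ((idY k m Y).submatrix id fun q : Fin k => ((S.orderIsoOfFin hS q : S) : Fin (k + m))).det

lemma strictMono_val_le {r n : ℕ} {c : Fin r → Fin n} (hc : StrictMono c) (i : Fin r) :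
    (i : ℕ) ≤ (c i : ℕ) := by
  obtain ⟨v, hv⟩ := i
  induction v with
  | zero => exact Nat.zero_le _
  | succ j ih =>
    have h2 := hc (show (⟨j, by omega⟩ : Fin r) < ⟨j+1, hv⟩ from by
      rw [Fin.lt_def]; simp)
    have h3 := ih (by omega)
    rw [Fin.lt_def] at h2
    simp only [Fin.val_mk] at h2 h3 ⊢
    omega

lemma succAbove_val {n : ℕ} (p : Fin (n+1)) (z : Fin n) :
    ((p.succAbove z) : ℕ) = if (z:ℕ) < (p:ℕ) then (z:ℕ) else (z:ℕ)+1 := by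
  rcases lt_or_ge (Fin.castSucc z) p with h | h
  · rw [Fin.succAbove_of_castSucc_lt _ _ h]
    have : (z:ℕ) < (p:ℕ) := by simpa [Fin.lt_def] using h
    simp [this]
  · rw [Fin.succAbove_of_le_castSucc _ _ h]
    have : ¬ (z:ℕ) < (p:ℕ) := by
      rw [Fin.le_def] at h; simp only [Fin.coe_castSucc] at h; omega
    simp [this]

def downAt {n : ℕ} (p y : Fin (n+1)) (h : (y:ℕ) ≠ (p:ℕ)) : Fin n :=
  if _ : (y:ℕ) < (p:ℕ) then ⟨y, by omega⟩ else ⟨(y:ℕ) - 1, by omega⟩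

lemma downAt_val {n : ℕ} (p y : Fin (n+1)) (h : (y:ℕ) ≠ (p:ℕ)) :
    ((downAt p y h : Fin n) : ℕ) = if (y:ℕ) < (p:ℕ) then (y:ℕ) else (y:ℕ) - 1 := by
  unfold downAt; split_ifs <;> rfl

lemma succAbove_downAt {n : ℕ} (p y : Fin (n+1)) (h : (y:ℕ) ≠ (p:ℕ)) :
    p.succAbove (downAt p y h) = y := by
  apply Fin.ext
  rw [succAbove_val, downAt_val]
  split_ifs <;> omega

def Mblk (r l : ℕ) (c : Fin r → Fin (r+l)) (W : Matrix (Fin (r+l)) (Fin l) ℝ) :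
    Matrix (Fin (r+l)) (Fin (r+l)) ℝ :=
  Matrix.of fun x q =>
    if hq : (q:ℕ) < r then (if x = c ⟨(q:ℕ), hq⟩ then (1:ℝ) else 0)
    else W x ⟨(q:ℕ) - r, by omega⟩

lemma det_Mblk (r : ℕ) : ∀ (l : ℕ) (c : Fin r → Fin (r+l)) (d : Fin l → Fin (r+l)),
    StrictMono c → StrictMono d → (∀ i j, c i ≠ d j) →
    ∀ W : Matrix (Fin (r+l)) (Fin l) ℝ,
    (Mblk r l c W).det
      = (-1:ℝ)^(∑ i : Fin r, ((c i : ℕ) - (i:ℕ))) * (W.submatrix d id).det := by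
  induction r with
  | zero =>
    intro l c d _ hd _ W
    simp only [Finset.univ_eq_empty, Finset.sum_empty, pow_zero, one_mul]
    have hcard : (Finset.univ : Finset (Fin (0+l))).card = l := by simp
    have hgmono : StrictMono (fun j : Fin l => (⟨(j:ℕ), by omega⟩ : Fin (0+l))) := by
      intro a b hab; rw [Fin.lt_def] at hab ⊢; simpa using hab
    have h1 := Finset.orderEmbOfFin_unique hcard (f := d) (fun x => Finset.mem_univ _) hd
    have h2 := Finset.orderEmbOfFin_unique hcard
        (f := fun j : Fin l => (⟨(j:ℕ), by omega⟩ : Fin (0+l))) (fun x => Finset.mem_univ _) hgmono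
    have hd' : ∀ j : Fin l, ((d j) : ℕ) = (j:ℕ) := by
      intro j
      have : d j = (fun j : Fin l => (⟨(j:ℕ), by omega⟩ : Fin (0+l))) j := by
        rw [h1, ← h2]
      rw [this]
    rw [← Matrix.det_submatrix_equiv_self (finCongr (show l = 0+l by omega)) (Mblk 0 l c W)]
    congr 1
    ext j j'
    simp only [Matrix.submatrix_apply, id_eq, Mblk, Matrix.of_apply, finCongr_apply]
    rw [dif_neg (by simp)]
    congr 1 <;> apply Fin.ext <;> simp [hd']
  | succ r ih =>
    intro l c d hc hd hcd W
    have hrl : r + 1 + l = (r + l) + 1 := by omega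
    set n := r + l with hn
    set e : Fin (n+1) ≃ Fin (r+1+l) := finCongr hrl.symm with he
    have hev : ∀ x : Fin (n+1), ((e x : Fin (r+1+l)) : ℕ) = (x : ℕ) := by
      intro x; simp [he]
    have hesv : ∀ y : Fin (r+1+l), ((e.symm y : Fin (n+1)) : ℕ) = (y : ℕ) := by
      intro y; simp [he]
    rw [← Matrix.det_submatrix_equiv_self e (Mblk (r+1) l c W)]
    set A := (Mblk (r+1) l c W).submatrix e e with hA
    rw [Matrix.det_succ_column_zero]
    set c₀ : Fin (r+1+l) := c ⟨0, by omega⟩ with hc₀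
    set i₀ : Fin (n+1) := e.symm c₀ with hi₀
    have hi₀v : (i₀ : ℕ) = (c₀ : ℕ) := hesv c₀
    have hA0 : ∀ i : Fin (n+1), A i 0 = if i = i₀ then (1:ℝ) else 0 := by
      intro i
      show Mblk (r+1) l c W (e i) (e 0) = _
      have h0 : ((e 0 : Fin (r+1+l)) : ℕ) = 0 := hev 0
      simp only [Mblk, Matrix.of_apply]
      rw [dif_pos (by omega)]
      have hc00 : c ⟨((e 0 : Fin (r+1+l)) : ℕ), by omega⟩ = c₀ := by
        rw [hc₀]; congr 1 <;> exact Fin.ext (by simp [h0])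
      rw [hc00]
      have hiff : (e i = c₀) ↔ i = i₀ := by
        rw [hi₀, ← Equiv.eq_symm_apply]
      simp only [hiff]
    rw [Finset.sum_eq_single i₀]
    · -- main term
      rw [hA0 i₀, if_pos rfl, mul_one]
      -- the minor
      have hcne : ∀ i : Fin r, ((e.symm (c i.succ) : Fin (n+1)) : ℕ) ≠ (i₀ : ℕ) := by
        intro i
        rw [hesv, hi₀v]
        have := hc (show (⟨0, by omega⟩ : Fin (r+1)) < i.succ from by
          rw [Fin.lt_def]; simp)
        rw [Fin.lt_def] at this
        rw [hc₀]
        omega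
      have hdne : ∀ j : Fin l, ((e.symm (d j) : Fin (n+1)) : ℕ) ≠ (i₀ : ℕ) := by
        intro j
        rw [hesv, hi₀v]
        intro hcon
        exact hcd ⟨0, by omega⟩ j (Fin.ext hcon).symm
      set c' : Fin r → Fin n := fun i => downAt i₀ (e.symm (c i.succ)) (hcne i) with hc'
      set d' : Fin l → Fin n := fun j => downAt i₀ (e.symm (d j)) (hdne j) with hd'
      set W' : Matrix (Fin n) (Fin l) ℝ :=
        Matrix.of (fun x j => W (e (i₀.succAbove x)) j) with hW'
      have keyc : ∀ i : Fin r, e (i₀.succAbove (c' i)) = c i.succ := by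
        intro i; rw [hc', succAbove_downAt]; simp
      have keyd : ∀ j : Fin l, e (i₀.succAbove (d' j)) = d j := by
        intro j; rw [hd', succAbove_downAt]; simp
      have hgt : ∀ i : Fin r, (c₀ : ℕ) < (c i.succ : ℕ) := by
        intro i
        have := hc (show (⟨0, by omega⟩ : Fin (r+1)) < i.succ from by
          rw [Fin.lt_def]; simp)
        rw [Fin.lt_def] at this
        rw [hc₀]
        exact this
      have hc'm : StrictMono c' := by
        intro a b hab
        rw [← Fin.succAbove_lt_succAbove_iff (p := i₀)]
        have h1 := hc (Fin.succ_lt_succ_iff.2 hab)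
        rw [hc']
        simp only
        rw [succAbove_downAt, succAbove_downAt]
        rw [Fin.lt_def, hesv, hesv, ← Fin.lt_def]
        exact h1
      have hd'm : StrictMono d' := by
        intro a b hab
        rw [← Fin.succAbove_lt_succAbove_iff (p := i₀)]
        have h1 := hd hab
        rw [hd']
        simp only
        rw [succAbove_downAt, succAbove_downAt]
        rw [Fin.lt_def, hesv, hesv, ← Fin.lt_def]
        exact h1
      have hcd' : ∀ i j, c' i ≠ d' j := by
        intro i j hcon
        exact hcd i.succ j (by rw [← keyc i, ← keyd j]; exact congrArg (fun z => e (i₀.succAbove z)) hcon)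
      have hminor : A.submatrix i₀.succAbove Fin.succ = Mblk r l c' W' := by
        ext x q
        show Mblk (r+1) l c W (e (i₀.succAbove x)) (e q.succ) = _
        have hqs : ((e q.succ : Fin (r+1+l)) : ℕ) = (q:ℕ) + 1 := by rw [hev]; simp
        by_cases hq : (q:ℕ) < r
        · rw [show Mblk (r+1) l c W (e (i₀.succAbove x)) (e q.succ)
              = (if e (i₀.succAbove x) = c ⟨((e q.succ : Fin (r+1+l)) : ℕ), by omega⟩
                  then (1:ℝ) else 0) from dif_pos (by omega)]
          rw [show (Mblk r l c' W') x q = if x = c' ⟨(q:ℕ), hq⟩ then (1:ℝ) else 0 from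
            dif_pos hq]
          have harg : (⟨((e q.succ : Fin (r+1+l)) : ℕ), by omega⟩ : Fin (r+1))
              = (⟨(q:ℕ), hq⟩ : Fin r).succ := Fin.ext (by rw [hqs]; simp)
          rw [harg]
          have hiff : (e (i₀.succAbove x) = c (⟨(q:ℕ), hq⟩ : Fin r).succ) ↔ x = c' ⟨(q:ℕ), hq⟩ := by
            constructor
            · intro hh
              apply Fin.succAbove_right_injective (p := i₀)
              apply e.injective
              rw [keyc, hh]
            · intro hh; rw [hh, keyc]
          simp only [hiff]
        · rw [show Mblk (r+1) l c W (e (i₀.succAbove x)) (e q.succ)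
              = W (e (i₀.succAbove x)) ⟨((e q.succ : Fin (r+1+l)) : ℕ) - (r+1), by omega⟩ from
            dif_neg (by omega)]
          rw [show (Mblk r l c' W') x q = W' x ⟨(q:ℕ) - r, by omega⟩ from dif_neg hq]
          show W _ _ = W _ _
          congr 1
          exact Fin.ext (by simp only [Fin.val_mk]; omega)
      rw [hminor, ih l c' d' hc'm hd'm hcd' W']
      have hWW : W'.submatrix d' id = W.submatrix d id := by
        ext j j'
        show W (e (i₀.succAbove (d' j))) j' = W (d j) j'
        rw [keyd]
      rw [hWW]
      have hsum : ∑ i : Fin (r+1), ((c i : ℕ) - (i:ℕ))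
          = (i₀:ℕ) + ∑ i : Fin r, ((c' i : ℕ) - (i:ℕ)) := by
        rw [Fin.sum_univ_succ]
        have hx : (⟨0, by omega⟩ : Fin (r+1)) = 0 := by apply Fin.ext; simp
        have hterm0 : ((c (0 : Fin (r+1)) : ℕ) - ((0 : Fin (r+1)) : ℕ)) = (i₀ : ℕ) := by
          rw [hi₀v, hc₀, hx]
          simp
        rw [hterm0]
        congr 1
        apply Finset.sum_congr rfl
        intro i _
        have h1 : (c' i : ℕ) = (c i.succ : ℕ) - 1 := by
          rw [hc']
          simp only
          rw [downAt_val, if_neg (by rw [hesv, hi₀v]; have := hgt i; omega), hesv]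
        have h2 := hgt i
        rw [h1, Fin.val_succ]
        omega
      rw [hsum, pow_add, mul_assoc]
    · intro b _ hb
      rw [hA0 b, if_neg hb, mul_zero, zero_mul]
    · intro h; exact absurd (Finset.mem_univ i₀) h
lemma idY_left {k m : ℕ} (Y : Matrix (Fin k) (Fin m) ℝ) (p : Fin k) (i : Fin k) :
    idY k m Y p (Fin.castAdd m i) = if p = i then (1:ℝ) else 0 := by
  simp only [idY, Matrix.of_apply, Fin.append_left]

lemma idY_right {k m : ℕ} (Y : Matrix (Fin k) (Fin m) ℝ) (p : Fin k) (j : Fin m) :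
    idY k m Y p (Fin.natAdd k j) = Y p j := by
  simp only [idY, Matrix.of_apply, Fin.append_right]

/-- Minors of `Y` are expressed through Plücker coordinates of `[1_k  Y]`: for row
indices `α_1 < … < α_l` and column indices `β_1 < … < β_l`,
`det(Y_{α_i β_j}) = (−1)^{kl − l(l−1)/2 − (α_1+⋯+α_l)} ·
  x_{([1,k]∖{α}) ∪ {β+k}} / x_{[1,k]}`
(the `α_i` being counted `1`-based as in the paper). -/
theorem minor_eq_plucker_ratio (k m l : ℕ) (Y : Matrix (Fin k) (Fin m) ℝ)
    (α : Fin l → Fin k) (hα : StrictMono α)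
    (β : Fin l → Fin m) (hβ : StrictMono β)
    (S : Finset (Fin (k + m)))
    (hSdef : S = (Finset.univ \ Finset.image α Finset.univ).image (Fin.castAdd m) ∪
        Finset.image (fun t => Fin.natAdd k (β t)) Finset.univ)
    (hS : S.card = k)
    (S₀ : Finset (Fin (k + m)))
    (hS₀def : S₀ = Finset.image (Fin.castAdd m) Finset.univ)
    (hS₀ : S₀.card = k) :
    (Y.submatrix α β).det =
      (-1 : ℝ) ^ ((k * l : ℤ) - l * (l - 1) / 2 - ∑ t : Fin l, (((α t : ℕ) : ℤ) + 1)) *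
        plucker k m Y S hS / plucker k m Y S₀ hS₀ := by
  have hlk : l ≤ k := by
    have := Fintype.card_le_of_injective α hα.injective
    simpa using this
  -- plucker S₀ = 1
  have hcastmono : StrictMono (Fin.castAdd m : Fin k → Fin (k+m)) := by
    intro a b hab; rw [Fin.lt_def] at hab ⊢; simpa using hab
  have hmem₀ : ∀ q : Fin k, Fin.castAdd m q ∈ S₀ := by
    intro q; rw [hS₀def]; exact Finset.mem_image_of_mem _ (Finset.mem_univ q)
  have hcol₀ := Finset.orderEmbOfFin_unique hS₀ hmem₀ hcastmono
  have hp₀ : plucker k m Y S₀ hS₀ = 1 := by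
    unfold plucker
    have hcols : (fun q : Fin k => ((S₀.orderIsoOfFin hS₀ q : S₀) : Fin (k+m)))
        = Fin.castAdd m := by
      funext q; rw [Finset.coe_orderIsoOfFin_apply, ← hcol₀]
    rw [hcols]
    have hone : (idY k m Y).submatrix id (Fin.castAdd m) = 1 := by
      ext p q
      show idY k m Y p (Fin.castAdd m q) = _
      rw [idY_left]
      simp [Matrix.one_apply]
    rw [hone, Matrix.det_one]
  -- complement setup
  set C : Finset (Fin k) := Finset.univ \ Finset.image α Finset.univ with hCdef
  have hCcard : C.card = k - l := by
    rw [hCdef, Finset.card_sdiff_of_subset (Finset.subset_univ _),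
      Finset.card_image_of_injective _ hα.injective]
    simp
  set c : Fin (k-l) → Fin k := fun i => C.orderEmbOfFin hCcard i with hcdef
  have hcmono : StrictMono c := (C.orderEmbOfFin hCcard).strictMono
  have hcmem : ∀ i, c i ∈ C := fun i => Finset.orderEmbOfFin_mem C hCcard i
  set f : Fin k → Fin (k+m) := fun q =>
    if hq : (q:ℕ) < k - l then Fin.castAdd m (c ⟨(q:ℕ), hq⟩)
    else Fin.natAdd k (β ⟨(q:ℕ) - (k-l), by omega⟩) with hfdef
  have hfmono : StrictMono f := by
    intro a b hab
    rw [Fin.lt_def] at hab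
    rw [hfdef]
    simp only
    rcases lt_or_ge (a:ℕ) (k-l) with ha | ha <;> rcases lt_or_ge (b:ℕ) (k-l) with hb | hb
    · rw [dif_pos ha, dif_pos hb, Fin.lt_def]
      simp only [Fin.coe_castAdd]
      have := hcmono (show (⟨(a:ℕ), ha⟩ : Fin (k-l)) < ⟨(b:ℕ), hb⟩ from by
        rw [Fin.lt_def]; simpa)
      rw [Fin.lt_def] at this; exact this
    · rw [dif_pos ha, dif_neg (by omega), Fin.lt_def]
      simp only [Fin.coe_castAdd, Fin.coe_natAdd]
      have := (c ⟨(a:ℕ), ha⟩).isLt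
      omega
    · exact absurd hab (by omega)
    · rw [dif_neg (by omega), dif_neg (by omega), Fin.lt_def]
      simp only [Fin.coe_natAdd]
      have := hβ (show (⟨(a:ℕ)-(k-l), by omega⟩ : Fin l) < ⟨(b:ℕ)-(k-l), by omega⟩ from by
        rw [Fin.lt_def]; simp only [Fin.val_mk]; omega)
      rw [Fin.lt_def] at this
      omega
  have hfmem : ∀ q, f q ∈ S := by
    intro q
    rw [hSdef, hfdef]
    simp only
    rcases lt_or_ge (q:ℕ) (k-l) with h | h
    · rw [dif_pos h]
      exact Finset.mem_union_left _ (Finset.mem_image_of_mem _ (hcmem _))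
    · rw [dif_neg (by omega)]
      exact Finset.mem_union_right _ (Finset.mem_image_of_mem _ (Finset.mem_univ _))
  have hcolS := Finset.orderEmbOfFin_unique hS hfmem hfmono
  have hkr : k = (k - l) + l := by omega
  set e2 : Fin ((k-l)+l) ≃ Fin k := finCongr hkr.symm with he2
  have he2v : ∀ x : Fin ((k-l)+l), ((e2 x : Fin k) : ℕ) = (x:ℕ) := by
    intro x; rw [he2]; simp
  set ch : Fin (k-l) → Fin ((k-l)+l) := fun i => Fin.cast hkr (c i) with hch
  set dh : Fin l → Fin ((k-l)+l) := fun t => Fin.cast hkr (α t) with hdh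
  have hchv : ∀ i, ((ch i) : ℕ) = (c i : ℕ) := fun i => rfl
  have hdhv : ∀ t, ((dh t) : ℕ) = (α t : ℕ) := fun t => rfl
  set Wm : Matrix (Fin ((k-l)+l)) (Fin l) ℝ := Matrix.of (fun x t => Y (e2 x) (β t)) with hWm
  have hchm : StrictMono ch := by
    intro a b hab
    rw [Fin.lt_def, hchv, hchv, ← Fin.lt_def]
    exact hcmono hab
  have hdhm : StrictMono dh := by
    intro a b hab
    rw [Fin.lt_def, hdhv, hdhv, ← Fin.lt_def]
    exact hα hab
  have hchdh : ∀ i t, ch i ≠ dh t := by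
    intro i t hcon
    have h1 : c i = α t := by
      apply Fin.ext
      rw [← hchv, ← hdhv, hcon]
    have h2 := hcmem i
    rw [hCdef, Finset.mem_sdiff] at h2
    exact h2.2 (h1 ▸ Finset.mem_image_of_mem _ (Finset.mem_univ t))
  have hp : plucker k m Y S hS
      = (-1:ℝ)^(∑ i : Fin (k-l), ((c i : ℕ) - (i:ℕ))) * (Y.submatrix α β).det := by
    unfold plucker
    have hcols : (fun q : Fin k => ((S.orderIsoOfFin hS q : S) : Fin (k+m))) = f := by
      funext q; rw [Finset.coe_orderIsoOfFin_apply, ← hcolS]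
    rw [hcols]
    rw [← Matrix.det_submatrix_equiv_self e2 ((idY k m Y).submatrix id f)]
    have hMeq : ((idY k m Y).submatrix id f).submatrix e2 e2 = Mblk (k-l) l ch Wm := by
      ext x q
      show idY k m Y (e2 x) (f (e2 q)) = _
      have hqv := he2v q
      rw [hfdef]
      simp only
      by_cases hq : (q:ℕ) < k - l
      · rw [dif_pos (by omega), idY_left]
        rw [show (Mblk (k-l) l ch Wm) x q = if x = ch ⟨(q:ℕ), hq⟩ then (1:ℝ) else 0 from
          dif_pos hq]
        have harg : (⟨((e2 q : Fin k):ℕ), by omega⟩ : Fin (k-l)) = ⟨(q:ℕ), hq⟩ :=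
          Fin.ext (by simp only [Fin.val_mk]; omega)
        rw [harg]
        have hiff : (e2 x = c ⟨(q:ℕ), hq⟩) ↔ (x = ch ⟨(q:ℕ), hq⟩) := by
          rw [Fin.ext_iff, Fin.ext_iff, he2v, hchv]
        simp only [hiff]
      · rw [dif_neg (by omega), idY_right]
        rw [show (Mblk (k-l) l ch Wm) x q = Wm x ⟨(q:ℕ) - (k-l), by omega⟩ from dif_neg hq]
        rfl
    rw [hMeq]
    have hdm := det_Mblk (k-l) l ch dh hchm hdhm hchdh Wm
    rw [hdm]
    have hs1 : ∑ i : Fin (k-l), ((ch i : ℕ) - (i:ℕ)) = ∑ i : Fin (k-l), ((c i : ℕ) - (i:ℕ)) :=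
      Finset.sum_congr rfl (fun i _ => by rw [hchv])
    have hs2 : Wm.submatrix dh id = Y.submatrix α β := by
      ext t t'
      show Y (e2 (dh t)) (β t') = Y (α t) (β t')
      rfl
    rw [hs1, hs2]
  rw [hp, hp₀, div_one]
  set sN : ℕ := ∑ i : Fin (k-l), ((c i : ℕ) - (i:ℕ)) with hsN
  have hsNc : ((sN : ℕ) : ℤ)
      = (∑ i : Fin (k-l), ((c i : ℕ) : ℤ)) - (∑ i : Fin (k-l), ((i:ℕ):ℤ)) := by
    rw [hsN, Nat.cast_sum, ← Finset.sum_sub_distrib]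
    apply Finset.sum_congr rfl
    intro i _
    have := strictMono_val_le hcmono i
    rw [Nat.cast_sub this]
  have hsumC : (∑ i : Fin (k-l), ((c i : ℕ) : ℤ))
      = (∑ x : Fin k, ((x:ℕ):ℤ)) - ∑ t : Fin l, ((α t : ℕ):ℤ) := by
    have himg : Finset.image c Finset.univ = C := by
      apply Finset.eq_of_subset_of_card_le
      · intro x hx
        simp only [Finset.mem_image] at hx
        obtain ⟨i, _, hi⟩ := hx
        rw [← hi]; exact hcmem i
      · rw [Finset.card_image_of_injective _ hcmono.injective, hCcard]
        simp
    have h1 : (∑ x ∈ C, ((x:ℕ):ℤ)) = ∑ i : Fin (k-l), ((c i:ℕ):ℤ) := by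
      rw [← himg, Finset.sum_image (by intro x _ y _ hxy; exact hcmono.injective hxy)]
    have h2 : (∑ x ∈ C, ((x:ℕ):ℤ))
        = (∑ x : Fin k, ((x:ℕ):ℤ)) - ∑ x ∈ Finset.image α Finset.univ, ((x:ℕ):ℤ) := by
      rw [hCdef]; exact Finset.sum_sdiff_eq_sub (Finset.subset_univ _)
    have h3 : (∑ x ∈ Finset.image α Finset.univ, ((x:ℕ):ℤ)) = ∑ t : Fin l, ((α t:ℕ):ℤ) :=
      Finset.sum_image (by intro x _ y _ hxy; exact hα.injective hxy)
    rw [← h1, h2, h3]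
  have hgauss : ∀ N : ℕ, (∑ x : Fin N, ((x:ℕ):ℤ)) * 2 = (N:ℤ) * ((N:ℤ) - 1) := by
    intro N
    induction N with
    | zero => simp
    | succ N ihN =>
      rw [Fin.sum_univ_castSucc]
      simp only [Fin.coe_castSucc, Fin.val_last]
      push_cast
      linear_combination ihN
  have hT := hgauss k
  have hU := hgauss (k - l)
  have hrcast : ((k - l : ℕ) : ℤ) = (k:ℤ) - (l:ℤ) := Nat.cast_sub hlk
  rw [hrcast] at hU
  have hdiv : (2:ℤ) * ((l:ℤ) * ((l:ℤ) - 1) / 2) = (l:ℤ) * ((l:ℤ) - 1) := by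
    apply Int.two_mul_ediv_two_of_even
    have h := Int.even_mul_succ_self ((l:ℤ) - 1)
    rw [sub_add_cancel] at h
    rwa [mul_comm] at h
  have hαsum : (∑ t : Fin l, (((α t : ℕ):ℤ) + 1)) = (∑ t : Fin l, ((α t:ℕ):ℤ)) + l := by
    rw [Finset.sum_add_distrib]; simp
  have hcast : ((k * l : ℤ) - l * (l - 1) / 2 - ∑ t : Fin l, (((α t : ℕ) : ℤ) + 1))
      = ((sN : ℕ) : ℤ) := by
    rw [hsNc, hsumC, hαsum]
    linarith [hT, hU, hdiv]
  rw [hcast, zpow_natCast, ← mul_assoc]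
  have hone : (-1:ℝ)^sN * (-1:ℝ)^sN = 1 := by
    rw [← pow_add]
    exact Even.neg_one_pow ⟨sN, rfl⟩
  rw [hone, one_mul]
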